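/- arXiv:2302.04632 — 3 statements merged into one kernel-verified Lean document; each statement's English description precedes it below -/
import Mathlib

section
/- Let F ∈ ℂ[t]³ be a vector-valued polynomial of degree n. Let λ ∈ ℂ(t) be a rational function with partial fraction decomposition λ = p + Σ_{i=1}^{m} Σ_{j=−k_i}^{−1} λ_{i,j}(t−β_i)^j, where p ∈ ℂ[t], the β_i ∈ ℂ are pairwise distinct, k_i ≥ 1, and λ_{i,j} ∈ ℂ. Set λ_{i,j} := 0 for j < −k_i. Then λ·F has a rational antiderivative componentwise if and only if for every i ∈ {1,…,m} one has Σ_{j=0}^{n} λ_{i,−1−j} f_j(β_i) = 0, where F(t) = Σ_{j=0}^n f_j(β_i)(t−β_i)^j is the Taylor expansion of F at β_i. -/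
/-- A rational function `g ∈ ℂ(t)` has a rational antiderivative if it can be written as
`(a′b − ab′)/b²` for polynomials `a, b` with `b ≠ 0`; equivalently, it is the derivative
of the rational function `a/b`. -/
def HasRatAntideriv (g : RatFunc ℂ) : Prop :=
  ∃ a b : Polynomial ℂ, b ≠ 0 ∧
    g = algebraMap (Polynomial ℂ) (RatFunc ℂ) (Polynomial.derivative a * b - a * Polynomial.derivative b) /
        algebraMap (Polynomial ℂ) (RatFunc ℂ) (b ^ 2)

open Polynomial

local notation "𝔸" => algebraMap (Polynomial ℂ) (RatFunc ℂ)

lemma div_eq_div_cross {nu d nu' d' : Polynomial ℂ} (hd : d ≠ 0) (hd' : d' ≠ 0)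
    (h : nu * d' = nu' * d) : 𝔸 nu / 𝔸 d = 𝔸 nu' / 𝔸 d' := by
  rw [div_eq_div_iff (RatFunc.algebraMap_ne_zero hd) (RatFunc.algebraMap_ne_zero hd'),
    ← map_mul, ← map_mul, h]

lemma hra_zero : HasRatAntideriv 0 := ⟨0, 1, one_ne_zero, by simp⟩

lemma hra_add {g h : RatFunc ℂ} (hg : HasRatAntideriv g) (hh : HasRatAntideriv h) :
    HasRatAntideriv (g + h) := by
  obtain ⟨a₁, b₁, hb₁, rfl⟩ := hg
  obtain ⟨a₂, b₂, hb₂, rfl⟩ := hh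
  refine ⟨a₁ * b₂ + a₂ * b₁, b₁ * b₂, mul_ne_zero hb₁ hb₂, ?_⟩
  rw [div_add_div _ _ (RatFunc.algebraMap_ne_zero (pow_ne_zero 2 hb₁))
      (RatFunc.algebraMap_ne_zero (pow_ne_zero 2 hb₂))]
  simp only [← map_mul, ← map_add]
  refine div_eq_div_cross (mul_ne_zero (pow_ne_zero 2 hb₁) (pow_ne_zero 2 hb₂))
      (pow_ne_zero 2 (mul_ne_zero hb₁ hb₂)) ?_
  simp only [derivative_add, derivative_mul]
  ring

lemma hra_smul (r : ℂ) {g : RatFunc ℂ} (hg : HasRatAntideriv g) :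
    HasRatAntideriv (r • g) := by
  obtain ⟨a, b, hb, rfl⟩ := hg
  refine ⟨Polynomial.C r * a, b, hb, ?_⟩
  rw [Algebra.smul_def, IsScalarTower.algebraMap_apply ℂ (Polynomial ℂ) (RatFunc ℂ),
    ← mul_div_assoc, ← map_mul]
  congr 2
  simp only [Polynomial.algebraMap_eq, derivative_mul, derivative_C]
  ring

lemma hra_sum {ι : Type*} (s : Finset ι) (f : ι → RatFunc ℂ)
    (h : ∀ i ∈ s, HasRatAntideriv (f i)) : HasRatAntideriv (∑ i ∈ s, f i) := by
  induction s using Finset.cons_induction with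
  | empty => simpa using hra_zero
  | cons i s hi ih =>
    rw [Finset.sum_cons]
    exact hra_add (h i (Finset.mem_cons_self i s)) (ih fun j hj => h j (Finset.mem_cons_of_mem hj))

lemma hra_sub {g h : RatFunc ℂ} (hg : HasRatAntideriv g) (hh : HasRatAntideriv h) :
    HasRatAntideriv (g - h) := by
  have := hra_add hg (hra_smul (-1 : ℂ) hh)
  simpa [sub_eq_add_neg] using this

lemma exists_antideriv (q : Polynomial ℂ) : ∃ a : Polynomial ℂ, Polynomial.derivative a = q := by
  induction q using Polynomial.induction_on' with
  | add p q hp hq =>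
    obtain ⟨a, ha⟩ := hp; obtain ⟨b, hb⟩ := hq
    exact ⟨a + b, by simp [ha, hb]⟩
  | monomial n a =>
    refine ⟨Polynomial.monomial (n + 1) (a / (n + 1)), ?_⟩
    rw [Polynomial.derivative_monomial]
    simp only [Nat.add_sub_cancel, Nat.cast_add, Nat.cast_one]
    rw [div_mul_cancel₀ _ (Nat.cast_add_one_ne_zero n)]

lemma hra_poly (q : Polynomial ℂ) : HasRatAntideriv (𝔸 q) := by
  obtain ⟨a, ha⟩ := exists_antideriv q
  exact ⟨a, 1, one_ne_zero, by simp [ha]⟩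

lemma zeq (β : ℂ) : RatFunc.X - RatFunc.C β = 𝔸 (X - Polynomial.C β) := by
  simp [RatFunc.algebraMap_X, RatFunc.algebraMap_C]

lemma zne (β : ℂ) : RatFunc.X - RatFunc.C β ≠ 0 := by
  rw [zeq]
  exact RatFunc.algebraMap_ne_zero (Polynomial.X_sub_C_ne_zero β)

lemma hra_zpow (β : ℂ) (w : ℤ) (hw : w ≠ -1) :
    HasRatAntideriv ((RatFunc.X - RatFunc.C β) ^ w) := by
  rcases le_or_gt 0 w with h | h
  · lift w to ℕ using h
    rw [zpow_natCast, zeq, ← map_pow]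
    exact hra_poly _
  · -- w ≤ -2
    have hw2 : w ≤ -2 := by omega
    set m : ℕ := (-(w + 1)).toNat with hm
    have hm1 : 1 ≤ m := by omega
    have hmw : (m : ℤ) = -(w + 1) := by omega
    have hmC : (m : ℂ) ≠ 0 := by exact_mod_cast by omega
    set r : ℂ := -1 / (m : ℂ) with hr
    refine ⟨Polynomial.C r, (X - Polynomial.C β) ^ m, pow_ne_zero _ (X_sub_C_ne_zero β), ?_⟩
    have hnum : Polynomial.derivative (Polynomial.C r) * (X - Polynomial.C β) ^ m -
        Polynomial.C r * Polynomial.derivative ((X - Polynomial.C β) ^ m) =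
        (X - Polynomial.C β) ^ (m - 1) := by
      rw [derivative_C, zero_mul, zero_sub, derivative_pow, derivative_X_sub_C, mul_one,
        ← mul_assoc, ← Polynomial.C_mul]
      have : r * (m : ℂ) = -1 := by rw [hr, div_mul_cancel₀ _ hmC]
      rw [this, map_neg, map_one, neg_mul, neg_neg, one_mul]
    rw [hnum, ← pow_mul]
    have hwe : w = ((m - 1 : ℕ) : ℤ) - ((m * 2 : ℕ) : ℤ) := by push_cast; omega
    rw [hwe, zpow_sub₀ (zne β), zpow_natCast, zpow_natCast, zeq, ← map_pow, ← map_pow]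

lemma residues_vanish {m : ℕ} (β : Fin m → ℂ) (hβ : Function.Injective β) (r : Fin m → ℂ)
    (h : HasRatAntideriv (∑ i : Fin m, r i • (RatFunc.X - RatFunc.C (β i))⁻¹)) :
    ∀ i, r i = 0 := by
  classical
  obtain ⟨a, b, hb, heq⟩ := h
  set s : Fin m → Polynomial ℂ := fun i => X - Polynomial.C (β i) with hs
  have hsne : ∀ i, s i ≠ 0 := fun i => X_sub_C_ne_zero (β i)
  set D : Polynomial ℂ := ∏ i : Fin m, s i with hD
  have hDne : D ≠ 0 := Finset.prod_ne_zero_iff.2 fun i _ => hsne i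
  set N : Polynomial ℂ := ∑ i : Fin m, Polynomial.C (r i) * ∏ i' ∈ Finset.univ.erase i, s i'
    with hN
  -- Step 1 : rewrite the LHS as 𝔸 N / 𝔸 D
  have hLHS : (∑ i : Fin m, r i • (RatFunc.X - RatFunc.C (β i))⁻¹) = 𝔸 N / 𝔸 D := by
    rw [hN, map_sum, Finset.sum_div]
    refine Finset.sum_congr rfl fun i _ => ?_
    rw [zeq, Algebra.smul_def, IsScalarTower.algebraMap_apply ℂ (Polynomial ℂ) (RatFunc ℂ),
      Polynomial.algebraMap_eq, ← div_eq_mul_inv]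
    exact div_eq_div_cross (hsne i) hDne
      (by rw [hD, ← Finset.mul_prod_erase _ _ (Finset.mem_univ i)]; ring)
  rw [hLHS] at heq
  -- Step 2 : clear denominators
  have hcross : N * b ^ 2 = (Polynomial.derivative a * b - a * Polynomial.derivative b) * D := by
    apply RatFunc.algebraMap_injective
    rw [map_mul, map_mul]
    rw [div_eq_div_iff (RatFunc.algebraMap_ne_zero hDne)
      (RatFunc.algebraMap_ne_zero (pow_ne_zero 2 hb))] at heq
    exact heq
  -- Step 3 : reduce to coprime numerator/denominator
  set g : Polynomial ℂ := GCDMonoid.gcd a b with hg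
  have hgne : g ≠ 0 := gcd_ne_zero_of_right hb
  set a₀ : Polynomial ℂ := a / g with ha₀
  set b₀ : Polynomial ℂ := b / g with hb₀
  have ha : a = g * a₀ := (EuclideanDomain.mul_div_cancel' hgne (gcd_dvd_left a b)).symm
  have hbb : b = g * b₀ := (EuclideanDomain.mul_div_cancel' hgne (gcd_dvd_right a b)).symm
  have hb₀ne : b₀ ≠ 0 := right_div_gcd_ne_zero hb
  have hcop : IsCoprime a₀ b₀ := isCoprime_div_gcd_div_gcd hb
  set w₀ : Polynomial ℂ := Polynomial.derivative a₀ * b₀ - a₀ * Polynomial.derivative b₀ with hw₀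
  have hcross₀ : N * b₀ ^ 2 = w₀ * D := by
    have h2 : g ^ 2 * (N * b₀ ^ 2) = g ^ 2 * (w₀ * D) := by
      have h3 := hcross
      rw [ha, hbb] at h3
      simp only [derivative_mul] at h3
      rw [hw₀]
      linear_combination h3
    exact mul_left_cancel₀ (pow_ne_zero 2 hgne) h2
  -- Step 4 : N vanishes at each β i
  have hNeval : ∀ i, N.eval (β i) = 0 := by
    intro i
    have hDeval : D.eval (β i) = 0 := by
      rw [hD, Polynomial.eval_prod]
      exact Finset.prod_eq_zero (Finset.mem_univ i) (by simp [hs])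
    by_cases hdvd : s i ∣ b₀
    · -- pole case : contradiction
      exfalso
      have hb₀root : b₀.eval (β i) = 0 := by
        rw [← Polynomial.IsRoot.def, ← Polynomial.dvd_iff_isRoot]; exact hdvd
      have ha₀ne : a₀.eval (β i) ≠ 0 := by
        intro h0
        obtain ⟨u, v, huv⟩ := hcop
        have h4 := congrArg (Polynomial.eval (β i)) huv
        simp [h0, hb₀root] at h4
      have he1 : 1 ≤ b₀.rootMultiplicity (β i) :=
        (Polynomial.rootMultiplicity_pos hb₀ne).2 hb₀root
      obtain ⟨q, hq, hndvd⟩ := b₀.exists_eq_pow_rootMultiplicity_mul_and_not_dvd hb₀ne (β i)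
      obtain ⟨e', he'⟩ : ∃ e', b₀.rootMultiplicity (β i) = e' + 1 := ⟨b₀.rootMultiplicity (β i) - 1, by omega⟩
      rw [he'] at hq
      set t : Polynomial ℂ := X - Polynomial.C (β i) with ht
      have hqβ : q.eval (β i) ≠ 0 := fun h0 => hndvd (Polynomial.dvd_iff_isRoot.2 h0)
      set u₀ : Polynomial ℂ := Polynomial.derivative a₀ * t * q -
        a₀ * (Polynomial.C ((e' + 1 : ℕ) : ℂ) * q + t * Polynomial.derivative q) with hu₀
      have hw₀eq : w₀ = t ^ e' * u₀ := by
        rw [hw₀, hq, hu₀]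
        simp only [derivative_mul, derivative_pow, derivative_X_sub_C, ht, mul_one,
          Nat.add_sub_cancel]
        push_cast
        ring
      set D₀ : Polynomial ℂ := ∏ i' ∈ Finset.univ.erase i, s i' with hD₀
      have hDfac : D = t * D₀ := by
        rw [hD, hD₀, ← Finset.mul_prod_erase _ _ (Finset.mem_univ i)]
      have hD₀β : D₀.eval (β i) ≠ 0 := by
        rw [hD₀, Polynomial.eval_prod]
        refine Finset.prod_ne_zero_iff.2 fun i' hi' => ?_
        simp only [hs, Polynomial.eval_sub, Polynomial.eval_X, Polynomial.eval_C]
        exact sub_ne_zero_of_ne fun hc => (Finset.mem_erase.1 hi').1 (hβ hc.symm)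
      have hu₀β : u₀.eval (β i) ≠ 0 := by
        have h5 : u₀.eval (β i) =
            -(a₀.eval (β i) * (((e' + 1 : ℕ) : ℂ) * q.eval (β i))) := by
          simp only [hu₀, ht, Polynomial.eval_sub, Polynomial.eval_mul, Polynomial.eval_add,
            Polynomial.eval_X, Polynomial.eval_C]
          ring
        rw [h5]
        refine neg_ne_zero.2 (mul_ne_zero ha₀ne (mul_ne_zero ?_ hqβ))
        exact_mod_cast Nat.succ_ne_zero e'
      -- main cancellation : N * t^(e'+1) * q^2 = u₀ * D₀
      have hkey : N * t ^ (e' + 1) * q ^ 2 = u₀ * D₀ := by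
        have h1 : (N * t ^ (e' + 1) * q ^ 2) * t ^ (e' + 1) = (u₀ * D₀) * t ^ (e' + 1) := by
          have h6 := hcross₀
          rw [hq, hw₀eq, hDfac] at h6
          linear_combination h6
        exact mul_right_cancel₀ (pow_ne_zero (e' + 1) (X_sub_C_ne_zero (β i))) h1
      have h7 := congrArg (Polynomial.eval (β i)) hkey
      simp only [Polynomial.eval_mul, Polynomial.eval_pow, ht, Polynomial.eval_sub,
        Polynomial.eval_X, Polynomial.eval_C, sub_self, zero_pow (Nat.succ_ne_zero e'),
        mul_zero, zero_mul] at h7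
      exact (mul_ne_zero hu₀β hD₀β) h7.symm
    · -- regular case
      have hb₀β : b₀.eval (β i) ≠ 0 := fun h0 => hdvd (Polynomial.dvd_iff_isRoot.2 h0)
      have h8 := congrArg (Polynomial.eval (β i)) hcross₀
      simp only [Polynomial.eval_mul, Polynomial.eval_pow, hDeval, mul_zero] at h8
      exact (mul_eq_zero.1 h8).resolve_right (pow_ne_zero 2 hb₀β)
  -- Step 5 : conclude r i = 0
  intro i
  have hNe := hNeval i
  rw [hN, Polynomial.eval_finset_sum] at hNe
  rw [Finset.sum_eq_single i] at hNe
  · simp only [Polynomial.eval_mul, Polynomial.eval_C, Polynomial.eval_prod] at hNe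
    have hprod : ∏ i' ∈ Finset.univ.erase i, (s i').eval (β i) ≠ 0 := by
      refine Finset.prod_ne_zero_iff.2 fun i' hi' => ?_
      simp only [hs, Polynomial.eval_sub, Polynomial.eval_X, Polynomial.eval_C]
      exact sub_ne_zero_of_ne fun hc => (Finset.mem_erase.1 hi').1 (hβ hc.symm)
    exact (mul_eq_zero.1 hNe).resolve_right hprod
  · intro i' _ hi'
    simp only [Polynomial.eval_mul, Polynomial.eval_C, Polynomial.eval_prod]
    refine mul_eq_zero_of_right _
      (Finset.prod_eq_zero (Finset.mem_erase.2 ⟨Ne.symm hi', Finset.mem_univ i⟩) ?_)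
    simp [hs]
  · intro h'; exact absurd (Finset.mem_univ i) h'

/-- Let `F ∈ ℂ[t]³` have degree `n` and let
`λ = p + Σ_{i=1}^{m} Σ_{j=−k_i}^{−1} λ_{i,j}(t−β_i)^j` be a partial fraction decomposition
with pairwise distinct `β_i`, `k_i ≥ 1`, and `λ_{i,j} = 0` for `j < −k_i`.  Then `λ·F` has a
rational antiderivative componentwise if and only if for every `i` one has
`Σ_{j=0}^{n} λ_{i,−1−j} f_j(β_i) = 0`, where `f_j(β_i)` are the Taylor coefficients of `F`
at `β_i`. -/
theorem hasRatAntideriv_iff_all_zero_residua (n : ℕ) (F : Fin 3 → Polynomial ℂ)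
    (hdeg : ∀ i, (F i).natDegree ≤ n) (hlead : ∃ i, (F i).natDegree = n)
    (m : ℕ) (β : Fin m → ℂ) (hβ : Function.Injective β)
    (k : Fin m → ℕ) (hk : ∀ i, 1 ≤ k i)
    (p : Polynomial ℂ) (c : Fin m → ℤ → ℂ)
    (hc : ∀ (i : Fin m) (j : ℤ), j < -(k i : ℤ) → c i j = 0)
    (lam : RatFunc ℂ)
    (hlam : lam = algebraMap (Polynomial ℂ) (RatFunc ℂ) p +
      ∑ i : Fin m, ∑ j ∈ Finset.Icc (-(k i : ℤ)) (-1),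
        c i j • (RatFunc.X - RatFunc.C (β i)) ^ j) :
    (∀ l : Fin 3, HasRatAntideriv (lam * algebraMap (Polynomial ℂ) (RatFunc ℂ) (F l))) ↔
      ∀ i : Fin m,
        ∑ j ∈ Finset.range (n + 1),
          c i (-1 - (j : ℤ)) • (fun l => (Polynomial.taylor (β i) (F l)).coeff j) =
        (0 : Fin 3 → ℂ) := by
  classical
  subst hlam
  -- Taylor expansion of F l around β i
  have hflExp : ∀ (l : Fin 3) (i : Fin m), 𝔸 (F l) =
      ∑ s ∈ Finset.range (n + 1), ((Polynomial.taylor (β i) (F l)).coeff s) •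
        (RatFunc.X - RatFunc.C (β i)) ^ (s : ℤ) := by
    intro l i
    conv_lhs => rw [← Polynomial.sum_taylor_eq (F l) (β i)]
    rw [Polynomial.sum_over_range' _ (by simp) (n + 1)
      (by rw [Polynomial.natDegree_taylor]; exact Nat.lt_succ_of_le (hdeg l)), map_sum]
    refine Finset.sum_congr rfl fun s _ => ?_
    rw [map_mul, map_pow, RatFunc.algebraMap_C, ← zeq, zpow_natCast, RatFunc.smul_eq_C_mul]
  -- decomposition of lam * F l
  have hdecomp : ∀ l : Fin 3, ∃ E : RatFunc ℂ, HasRatAntideriv E ∧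
      (𝔸 p + ∑ i : Fin m, ∑ j ∈ Finset.Icc (-(k i : ℤ)) (-1),
        c i j • (RatFunc.X - RatFunc.C (β i)) ^ j) * 𝔸 (F l) =
      E + ∑ i : Fin m,
        (∑ s ∈ Finset.range (n + 1),
          c i (-1 - (s : ℤ)) * (Polynomial.taylor (β i) (F l)).coeff s) •
        (RatFunc.X - RatFunc.C (β i))⁻¹ := by
    intro l
    have hmul : ∀ (i : Fin m) (j : ℤ), (RatFunc.X - RatFunc.C (β i)) ^ j * 𝔸 (F l) =
        ∑ s ∈ Finset.range (n + 1), ((Polynomial.taylor (β i) (F l)).coeff s) •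
          (RatFunc.X - RatFunc.C (β i)) ^ (j + (s : ℤ)) := by
      intro i j
      rw [hflExp l i, Finset.mul_sum]
      refine Finset.sum_congr rfl fun s _ => ?_
      rw [mul_smul_comm, ← zpow_add₀ (zne (β i))]
    refine ⟨𝔸 (p * F l) + ∑ i : Fin m, ∑ j ∈ Finset.Icc (-(k i : ℤ)) (-1),
      ∑ s ∈ Finset.range (n + 1),
        (if j = -1 - (s : ℤ) then 0 else
          (c i j * (Polynomial.taylor (β i) (F l)).coeff s) •
            (RatFunc.X - RatFunc.C (β i)) ^ (j + (s : ℤ))), ?_, ?_⟩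
    · refine hra_add (hra_poly _) (hra_sum _ _ fun i _ => hra_sum _ _ fun j _ =>
        hra_sum _ _ fun s _ => ?_)
      split
      · exact hra_zero
      · next hne => exact hra_smul _ (hra_zpow (β i) _ (by omega))
    · calc (𝔸 p + ∑ i : Fin m, ∑ j ∈ Finset.Icc (-(k i : ℤ)) (-1),
            c i j • (RatFunc.X - RatFunc.C (β i)) ^ j) * 𝔸 (F l)
          = 𝔸 (p * F l) + ∑ i : Fin m, ∑ j ∈ Finset.Icc (-(k i : ℤ)) (-1),
            ∑ s ∈ Finset.range (n + 1),
              (c i j * (Polynomial.taylor (β i) (F l)).coeff s) •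
                (RatFunc.X - RatFunc.C (β i)) ^ (j + (s : ℤ)) := by
            rw [add_mul, Finset.sum_mul, map_mul]
            congr 1
            refine Finset.sum_congr rfl fun i _ => ?_
            rw [Finset.sum_mul]
            refine Finset.sum_congr rfl fun j _ => ?_
            rw [smul_mul_assoc, hmul i j, Finset.smul_sum]
            exact Finset.sum_congr rfl fun s _ => smul_smul _ _ _
        _ = (𝔸 (p * F l) + ∑ i : Fin m, ∑ j ∈ Finset.Icc (-(k i : ℤ)) (-1),
            ∑ s ∈ Finset.range (n + 1),
              (if j = -1 - (s : ℤ) then 0 else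
                (c i j * (Polynomial.taylor (β i) (F l)).coeff s) •
                  (RatFunc.X - RatFunc.C (β i)) ^ (j + (s : ℤ))))
            + ∑ i : Fin m, ∑ j ∈ Finset.Icc (-(k i : ℤ)) (-1),
            ∑ s ∈ Finset.range (n + 1),
              (if j = -1 - (s : ℤ) then
                (c i j * (Polynomial.taylor (β i) (F l)).coeff s) •
                  (RatFunc.X - RatFunc.C (β i)) ^ (-1 : ℤ) else 0) := by
            rw [add_assoc, ← Finset.sum_add_distrib]
            congr 1
            refine Finset.sum_congr rfl fun i _ => ?_
            rw [← Finset.sum_add_distrib]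
            refine Finset.sum_congr rfl fun j _ => ?_
            rw [← Finset.sum_add_distrib]
            refine Finset.sum_congr rfl fun s _ => ?_
            by_cases hjs : j = -1 - (s : ℤ)
            · have he9 : (-1 - (s : ℤ)) + s = -1 := by ring
              rw [if_pos hjs, if_pos hjs, zero_add, hjs, he9]
            · simp only [if_neg hjs, add_zero]
        _ = _ := by
            congr 1
            refine Finset.sum_congr rfl fun i _ => ?_
            rw [Finset.sum_comm]
            have hinner : ∀ s ∈ Finset.range (n + 1),
                (∑ j ∈ Finset.Icc (-(k i : ℤ)) (-1),
                  if j = -1 - (s : ℤ) then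
                    (c i j * (Polynomial.taylor (β i) (F l)).coeff s) •
                      (RatFunc.X - RatFunc.C (β i)) ^ (-1 : ℤ) else 0) =
                (c i (-1 - (s : ℤ)) * (Polynomial.taylor (β i) (F l)).coeff s) •
                  (RatFunc.X - RatFunc.C (β i)) ^ (-1 : ℤ) := by
              intro s _
              rw [Finset.sum_ite_eq']
              by_cases hmem : -1 - (s : ℤ) ∈ Finset.Icc (-(k i : ℤ)) (-1)
              · rw [if_pos hmem]
              · rw [if_neg hmem, hc i _ (by simp only [Finset.mem_Icc] at hmem; omega),
                  zero_mul, zero_smul]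
            rw [Finset.sum_congr rfl hinner, ← Finset.sum_smul, zpow_neg_one]
  constructor
  · intro h i
    funext l
    simp only [Finset.sum_apply, Pi.smul_apply, smul_eq_mul, Pi.zero_apply]
    obtain ⟨E, hE, hEq⟩ := hdecomp l
    refine residues_vanish β hβ
      (fun i' => ∑ s ∈ Finset.range (n + 1),
        c i' (-1 - (s : ℤ)) * (Polynomial.taylor (β i') (F l)).coeff s) ?_ i
    have h2 : (∑ i' : Fin m,
        (∑ s ∈ Finset.range (n + 1),
          c i' (-1 - (s : ℤ)) * (Polynomial.taylor (β i') (F l)).coeff s) •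
          (RatFunc.X - RatFunc.C (β i'))⁻¹) =
        (𝔸 p + ∑ i : Fin m, ∑ j ∈ Finset.Icc (-(k i : ℤ)) (-1),
          c i j • (RatFunc.X - RatFunc.C (β i)) ^ j) * 𝔸 (F l) - E := by
      rw [hEq]; ring
    rw [h2]
    exact hra_sub (h l) hE
  · intro h l
    obtain ⟨E, hE, hEq⟩ := hdecomp l
    rw [hEq]
    have hz : ∀ i : Fin m, (∑ s ∈ Finset.range (n + 1),
        c i (-1 - (s : ℤ)) * (Polynomial.taylor (β i) (F l)).coeff s) = 0 := by
      intro i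
      have h3 := congrFun (h i) l
      simpa only [Finset.sum_apply, Pi.smul_apply, smul_eq_mul, Pi.zero_apply] using h3
    have h4 : (∑ i : Fin m,
        (∑ s ∈ Finset.range (n + 1),
          c i (-1 - (s : ℤ)) * (Polynomial.taylor (β i) (F l)).coeff s) •
          (RatFunc.X - RatFunc.C (β i))⁻¹) = 0 :=
      Finset.sum_eq_zero fun i _ => by rw [hz i, zero_smul]
    rw [h4, add_zero]
    exact hE
end

section
/- Let β ∈ ℂ and let f_0, …, f_n ∈ ℂ³ with f_0 ≠ 0. Consider the linear map that sends a tuple (λ_{−n−1}, …, λ_{−1}) ∈ ℂ^{n+1} satisfying the zero-residuum constraint Σ_{j=0}^{n} λ_{−1−j} f_j = 0 to the tuple of Laurent coefficients (r_{−n}, …, r_{−1}, r_1, …, r_n) ∈ (ℂ³)^{2n} defined by r_j := (1/j)·Σ_{i=0}^{n} λ_{j−1−i} f_i (with the convention λ_m := 0 for m ∉ {−n−1, …, −1}). This map is injective. -/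
/-- If `f_0 ≠ 0`, the linear map sending a tuple `(λ_{−n−1}, …, λ_{−1})`
(encoded as `c : ℤ → ℂ` supported on `{−n−1, …, −1}`) satisfying the zero-residuum
constraint `Σ_{j=0}^{n} c_{−1−j} f_j = 0` to the Laurent coefficients
`r_j = (1/j)·Σ_{i=0}^{n} c_{j−1−i} f_i`, `j ∈ {−n, …, −1, 1, …, n}`, is injective. -/
theorem laurent_coefficients_map_injective (n : ℕ) (β : ℂ) (f : ℕ → Fin 3 → ℂ)
    (hf0 : f 0 ≠ 0) (c d : ℤ → ℂ)
    (hc : ∀ m : ℤ, m ∉ Finset.Icc (-(n : ℤ) - 1) (-1) → c m = 0)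
    (hd : ∀ m : ℤ, m ∉ Finset.Icc (-(n : ℤ) - 1) (-1) → d m = 0)
    (hresc : ∑ j ∈ Finset.range (n + 1), c (-1 - (j : ℤ)) • f j = (0 : Fin 3 → ℂ))
    (hresd : ∑ j ∈ Finset.range (n + 1), d (-1 - (j : ℤ)) • f j = (0 : Fin 3 → ℂ))
    (heq : ∀ j ∈ Finset.Icc (-(n : ℤ)) (n : ℤ), j ≠ 0 →
      ((j : ℂ))⁻¹ • ∑ i ∈ Finset.range (n + 1), c (j - 1 - (i : ℤ)) • f i =
      ((j : ℂ))⁻¹ • ∑ i ∈ Finset.range (n + 1), d (j - 1 - (i : ℤ)) • f i) :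
    c = d := by
  -- For each k ≤ n, the sums with j = -n + k agree for c and d.
  have hsum : ∀ k : ℕ, k ≤ n →
      ∑ i ∈ Finset.range (n + 1),
        (c (-(n : ℤ) + k - 1 - i) - d (-(n : ℤ) + k - 1 - i)) • f i = 0 := by
    intro k hk
    have h : ∑ i ∈ Finset.range (n + 1), c (-(n : ℤ) + k - 1 - i) • f i
           = ∑ i ∈ Finset.range (n + 1), d (-(n : ℤ) + k - 1 - i) • f i := by
      rcases eq_or_lt_of_le hk with rfl | hlt
      · have e : ∀ i : ℕ, -(k : ℤ) + k - 1 - i = -1 - i := fun i => by ring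
        simp only [e]
        rw [hresc, hresd]
      · have hjmem : (-(n : ℤ) + k) ∈ Finset.Icc (-(n : ℤ)) (n : ℤ) := by
          simp only [Finset.mem_Icc]; omega
        have hjne : (-(n : ℤ) + k) ≠ 0 := by omega
        have hinv : (((-(n : ℤ) + k : ℤ) : ℂ))⁻¹ ≠ 0 := by
          apply inv_ne_zero
          exact_mod_cast (Int.cast_ne_zero (α := ℂ)).mpr hjne
        exact smul_right_injective (Fin 3 → ℂ) hinv (heq _ hjmem hjne)
    simp only [sub_smul, Finset.sum_sub_distrib, h, sub_self]
  have key : ∀ k : ℕ, k ≤ n → c (-(n : ℤ) - 1 + k) = d (-(n : ℤ) - 1 + k) := by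
    intro k
    induction k using Nat.strong_induction_on with
    | _ k IH =>
      intro hk
      have h0 := hsum k hk
      rw [Finset.sum_eq_single_of_mem 0 (by simp)] at h0
      · have h1 := (smul_eq_zero.mp h0).resolve_right hf0
        have e : -(n : ℤ) + k - 1 - (0 : ℕ) = -(n : ℤ) - 1 + k := by push_cast; ring
        rw [e] at h1
        exact sub_eq_zero.mp h1
      · intro i hi hne
        by_cases hik : i ≤ k
        · have e : -(n : ℤ) + k - 1 - i = -(n : ℤ) - 1 + ((k - i : ℕ) : ℤ) := by
            push_cast [Nat.cast_sub hik]; ring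
          have hlt : k - i < k := by omega
          have hle : k - i ≤ n := by omega
          rw [e, IH (k - i) hlt hle, sub_self, zero_smul]
        · have hm : -(n : ℤ) + k - 1 - i ∉ Finset.Icc (-(n : ℤ) - 1) (-1) := by
            simp only [Finset.mem_Icc]; omega
          rw [hc _ hm, hd _ hm, sub_self, zero_smul]
  funext m
  by_cases hm : m ∈ Finset.Icc (-(n : ℤ) - 1) (-1)
  · simp only [Finset.mem_Icc] at hm
    set k := (m + n + 1).toNat with hkdef
    have hkc : (k : ℤ) = m + n + 1 := Int.toNat_of_nonneg (by omega)
    have hm' : m = -(n : ℤ) - 1 + k := by omega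
    have hkn : k ≤ n := by omega
    rw [hm']
    exact key k hkn
  · rw [hc m hm, hd m hm]
end

section
/- Let I ⊆ ℝ be an open interval, let λ : I → ℝ and F : I → ℝ³ be differentiable, and let r : I → ℝ³ be differentiable with r′(t) = λ(t)·F(t) for all t ∈ I. If t₀ ∈ I satisfies λ(t₀) ≠ 0 and F(t₀) ≠ 0, then the curvature of r at t₀ satisfies ‖r′(t₀) × r″(t₀)‖ / ‖r′(t₀)‖³ = ‖F(t₀) × F′(t₀)‖ / (‖r′(t₀)‖ · ‖F(t₀)‖²). In particular, the curvature at t₀ is completely determined by the velocity vector r′(t₀) together with F(t₀) and F′(t₀). -/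
open scoped Matrix

/-- The cross product on Euclidean 3-space. -/
noncomputable def cross3 (u v : EuclideanSpace ℝ (Fin 3)) : EuclideanSpace ℝ (Fin 3) :=
  (WithLp.equiv 2 (Fin 3 → ℝ)).symm ((WithLp.equiv 2 (Fin 3 → ℝ) u) ⨯₃ (WithLp.equiv 2 (Fin 3 → ℝ) v))

lemma cross3_smul_left (c : ℝ) (u v : EuclideanSpace ℝ (Fin 3)) :
    cross3 (c • u) v = c • cross3 u v := by
  simp [cross3, LinearMap.map_smul, LinearMap.smul_apply]

lemma cross3_smul_right (c : ℝ) (u v : EuclideanSpace ℝ (Fin 3)) :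
    cross3 u (c • v) = c • cross3 u v := by
  simp [cross3, LinearMap.map_smul]

lemma cross3_add_right (u v w : EuclideanSpace ℝ (Fin 3)) :
    cross3 u (v + w) = cross3 u v + cross3 u w := by
  simp [cross3, LinearMap.map_add]

lemma cross3_self (u : EuclideanSpace ℝ (Fin 3)) : cross3 u u = 0 := by
  simp [cross3, cross_self]

/-- If `r′ = λ·F` on an open interval with `λ`, `F` differentiable and
`λ(t₀) ≠ 0`, `F(t₀) ≠ 0`, then the curvature of `r` at `t₀` satisfies
`‖r′(t₀) × r″(t₀)‖ / ‖r′(t₀)‖³ = ‖F(t₀) × F′(t₀)‖ / (‖r′(t₀)‖·‖F(t₀)‖²)`. -/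
theorem curvature_determined_by_tangent_field (a b : ℝ) (lam : ℝ → ℝ)
    (F r : ℝ → EuclideanSpace ℝ (Fin 3))
    (hlam : ∀ t ∈ Set.Ioo a b, DifferentiableAt ℝ lam t)
    (hF : ∀ t ∈ Set.Ioo a b, DifferentiableAt ℝ F t)
    (hr : ∀ t ∈ Set.Ioo a b, HasDerivAt r (lam t • F t) t)
    (t₀ : ℝ) (ht₀ : t₀ ∈ Set.Ioo a b) (hlam₀ : lam t₀ ≠ 0) (hF₀ : F t₀ ≠ 0) :
    ‖cross3 (deriv r t₀) (deriv (deriv r) t₀)‖ / ‖deriv r t₀‖ ^ 3 =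
      ‖cross3 (F t₀) (deriv F t₀)‖ / (‖deriv r t₀‖ * ‖F t₀‖ ^ 2) := by
  have h1 : deriv r t₀ = lam t₀ • F t₀ := (hr t₀ ht₀).deriv
  -- deriv r agrees with lam • F on a neighborhood
  have heq : deriv r =ᶠ[nhds t₀] fun t => lam t • F t := by
    filter_upwards [isOpen_Ioo.mem_nhds ht₀] with t ht using (hr t ht).deriv
  have h2 : deriv (deriv r) t₀ =
      lam t₀ • deriv F t₀ + deriv lam t₀ • F t₀ := by
    rw [heq.deriv_eq]
    exact (HasDerivAt.smul ((hlam t₀ ht₀).hasDerivAt) ((hF t₀ ht₀).hasDerivAt)).deriv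
  have hcross : cross3 (deriv r t₀) (deriv (deriv r) t₀) =
      (lam t₀ ^ 2) • cross3 (F t₀) (deriv F t₀) := by
    rw [h1, h2, cross3_smul_left, cross3_add_right, cross3_smul_right, cross3_smul_right,
      cross3_self, smul_zero, add_zero, smul_smul, ← sq]
  have hnr : ‖deriv r t₀‖ = |lam t₀| * ‖F t₀‖ := by
    rw [h1, norm_smul, Real.norm_eq_abs]
  have hFn : ‖F t₀‖ ≠ 0 := norm_ne_zero_iff.mpr hF₀
  have hln : |lam t₀| ≠ 0 := abs_ne_zero.mpr hlam₀
  rw [hcross, norm_smul, hnr]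
  rw [Real.norm_eq_abs, abs_pow, sq_abs]
  field_simp
  rw [← sq_abs]
  ring
end
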